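/- Let ω = e^{2πi/3} and define five vectors in ℂ^2: φ_1 = (1, 0), φ_2 = (0, 1), φ_3 = (1/√2)(1, 1), φ_4 = (1/√2)(1, ω), φ_5 = (1/√2)(1, ω²). Then each φ_j is a unit vector, ∑_{j=1}^5 φ_j φ_j* = (5/2)·I_2 (so Φ is a tight frame), and the angle set A_Φ = { |⟨φ_j, φ_l⟩| : j ≠ l } equals {1/√2, 1/2, 0}; in particular Φ is a triangular (3-angular) tight frame whose coherence is 1/√2. -/

import Mathlib

open Complex

/-- The primitive cube root of unity `ω = e^{2πi/3}`. -/
noncomputable def ω₃ : ℂ := Complex.exp (2 * Real.pi * Complex.I / 3)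

/-- The five vectors `(1,0)`, `(0,1)`, `(1/√2)(1,1)`, `(1/√2)(1,ω)`, `(1/√2)(1,ω²)`
in `ℂ²`. -/
noncomputable def Φtri : Fin 5 → EuclideanSpace ℂ (Fin 2) :=
  ![(WithLp.equiv 2 (Fin 2 → ℂ)).symm ![1, 0],
    (WithLp.equiv 2 (Fin 2 → ℂ)).symm ![0, 1],
    (WithLp.equiv 2 (Fin 2 → ℂ)).symm ![(Real.sqrt 2 : ℂ)⁻¹, (Real.sqrt 2 : ℂ)⁻¹],
    (WithLp.equiv 2 (Fin 2 → ℂ)).symm ![(Real.sqrt 2 : ℂ)⁻¹, (Real.sqrt 2 : ℂ)⁻¹ * ω₃],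
    (WithLp.equiv 2 (Fin 2 → ℂ)).symm ![(Real.sqrt 2 : ℂ)⁻¹, (Real.sqrt 2 : ℂ)⁻¹ * ω₃ ^ 2]]

lemma ω₃_prim : IsPrimitiveRoot ω₃ 3 := by
  have := Complex.isPrimitiveRoot_exp 3 (by norm_num)
  simpa [ω₃, mul_comm] using this

lemma ω₃_cube : ω₃ ^ 3 = 1 := ω₃_prim.pow_eq_one

lemma ω₃_ne_one : ω₃ ≠ 1 := ω₃_prim.ne_one (by norm_num)

lemma ω₃_sum : 1 + ω₃ + ω₃ ^ 2 = 0 := by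
  have h : (ω₃ - 1) * (1 + ω₃ + ω₃ ^ 2) = 0 := by linear_combination ω₃_cube
  rcases mul_eq_zero.1 h with h | h
  · exact absurd (sub_eq_zero.1 h) ω₃_ne_one
  · exact h

lemma abs_ω₃ : ‖ω₃‖ = 1 := by
  simp [ω₃, Complex.norm_exp]

lemma conj_ω₃ : (starRingEnd ℂ) ω₃ = ω₃ ^ 2 := by
  have h2 : ω₃ * (starRingEnd ℂ) ω₃ = 1 := by
    rw [Complex.mul_conj]
    norm_cast
    rw [Complex.normSq_eq_norm_sq, abs_ω₃]; norm_num
  have h1 : ω₃ * ω₃ ^ 2 = 1 := by linear_combination ω₃_cube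
  have hne : ω₃ ≠ 0 := by
    intro h; rw [h] at h1; simp at h1
  rw [← h1] at h2
  exact mul_left_cancel₀ hne h2

/-- The Gram matrix of the five vectors. -/
noncomputable def Mmat : Fin 5 → Fin 5 → ℂ :=
  ![![1, 0, (Real.sqrt 2 : ℂ)⁻¹, (Real.sqrt 2 : ℂ)⁻¹, (Real.sqrt 2 : ℂ)⁻¹],
    ![0, 1, (Real.sqrt 2 : ℂ)⁻¹, (Real.sqrt 2 : ℂ)⁻¹ * ω₃, (Real.sqrt 2 : ℂ)⁻¹ * ω₃ ^ 2],
    ![(Real.sqrt 2 : ℂ)⁻¹, (Real.sqrt 2 : ℂ)⁻¹, 1, -ω₃ ^ 2 / 2, -ω₃ / 2],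
    ![(Real.sqrt 2 : ℂ)⁻¹, (Real.sqrt 2 : ℂ)⁻¹ * ω₃ ^ 2, -ω₃ / 2, 1, -ω₃ ^ 2 / 2],
    ![(Real.sqrt 2 : ℂ)⁻¹, (Real.sqrt 2 : ℂ)⁻¹ * ω₃, -ω₃ ^ 2 / 2, -ω₃ / 2, 1]]

lemma hinv2 : ((Real.sqrt 2 : ℝ) : ℂ)⁻¹ ^ 2 = 1/2 := by
  rw [inv_pow, show ((Real.sqrt 2:ℝ):ℂ) ^ 2 = 2 by
    norm_cast; exact Real.sq_sqrt (by norm_num)]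
  norm_num

lemma inner_val : ∀ j l, (inner ℂ (Φtri j) (Φtri l) : ℂ) = Mmat j l := by
  intro j l
  fin_cases j <;> fin_cases l <;>
    simp [Φtri, Mmat, PiLp.inner_apply, Fin.sum_univ_two, PiLp.toLp_apply,
      conj_ω₃, map_mul, map_inv₀, Matrix.vecHead, Matrix.vecTail, -inner_self_eq_norm_sq_to_K] <;>
    (try ring_nf) <;>
    (try rw [hinv2]) <;>
    first
      | ring1
      | linear_combination (1/2:ℂ) * ω₃_sum
      | linear_combination ω₃ * ω₃_cube
      | linear_combination (1/2:ℂ) * ω₃_cube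
      | linear_combination (1/2:ℂ) * ω₃_sum + (ω₃/2) * ω₃_cube
      | linear_combination (1/2:ℂ) * ω₃_sum + (ω₃^2/2) * ω₃_cube
      | linear_combination ((ω₃^3+1)/2) * ω₃_cube

lemma abs_s : ‖((Real.sqrt 2 : ℝ) : ℂ)⁻¹‖ = 1 / Real.sqrt 2 := by
  rw [norm_inv, Complex.norm_real, Real.norm_of_nonneg (Real.sqrt_nonneg 2), one_div]

lemma abs_sω : ‖((Real.sqrt 2 : ℝ) : ℂ)⁻¹ * ω₃‖ = 1 / Real.sqrt 2 := by
  rw [norm_mul, abs_s, abs_ω₃, mul_one]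

lemma abs_sω2 : ‖((Real.sqrt 2 : ℝ) : ℂ)⁻¹ * ω₃ ^ 2‖ = 1 / Real.sqrt 2 := by
  rw [norm_mul, abs_s, norm_pow, abs_ω₃]; norm_num

lemma abs_hω : ‖-ω₃ / 2‖ = 1 / 2 := by
  rw [norm_div, norm_neg, abs_ω₃]; norm_num

lemma abs_hω2 : ‖-ω₃ ^ 2 / 2‖ = 1 / 2 := by
  rw [norm_div, norm_neg, norm_pow, abs_ω₃]; norm_num

lemma sqrt2_lt_two : Real.sqrt 2 < 2 := by
  nlinarith [Real.sq_sqrt (show (0:ℝ) ≤ 2 by norm_num), Real.sqrt_nonneg 2]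

lemma sqrt2_pos : (0:ℝ) < Real.sqrt 2 := Real.sqrt_pos.2 (by norm_num)

lemma half_lt : (1:ℝ) / 2 < 1 / Real.sqrt 2 := by
  rw [div_lt_div_iff₀ (by norm_num) sqrt2_pos]
  nlinarith [sqrt2_lt_two]

lemma half_le' : (1:ℝ) / 2 ≤ (Real.sqrt 2)⁻¹ := by
  rw [← one_div]; exact half_lt.le

theorem triangular_tight_grassmannian_five_two :
    (∀ j, ‖Φtri j‖ = 1) ∧
    (∀ x : EuclideanSpace ℂ (Fin 2),
      ∑ j, (inner ℂ (Φtri j) x : ℂ) • Φtri j = (5 / 2 : ℂ) • x) ∧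
    {r : ℝ | ∃ j l, j ≠ l ∧ ‖(inner ℂ (Φtri j) (Φtri l) : ℂ)‖ = r}
      = {1 / Real.sqrt 2, 1 / 2, 0} ∧
    {r : ℝ | ∃ j l, j ≠ l ∧ ‖(inner ℂ (Φtri j) (Φtri l) : ℂ)‖ = r}.ncard = 3 ∧
    IsGreatest {r : ℝ | ∃ j l, j ≠ l ∧ ‖(inner ℂ (Φtri j) (Φtri l) : ℂ)‖ = r}
      (1 / Real.sqrt 2) := by
  have habs : ∀ j l : Fin 5, ‖(inner ℂ (Φtri j) (Φtri l) : ℂ)‖ = ‖Mmat j l‖ := by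
    intro j l; rw [inner_val]
  have hset : {r : ℝ | ∃ j l, j ≠ l ∧ ‖(inner ℂ (Φtri j) (Φtri l) : ℂ)‖ = r}
      = {1 / Real.sqrt 2, 1 / 2, 0} := by
    ext r
    simp only [Set.mem_setOf_eq, Set.mem_insert_iff, Set.mem_singleton_iff]
    constructor
    · rintro ⟨j, l, hjl, rfl⟩
      rw [habs]
      fin_cases j <;> fin_cases l <;> (try exact absurd rfl hjl) <;>
        simp [Mmat, map_mul, map_div₀, map_neg_eq_map, map_inv₀, map_pow, abs_ω₃,
          Complex.norm_real, _root_.abs_of_nonneg (Real.sqrt_nonneg 2),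
          Matrix.vecHead, Matrix.vecTail] <;> norm_num
    · rintro (rfl | rfl | rfl)
      · exact ⟨0, 2, by decide, by rw [habs]; simp [Mmat, abs_s]⟩
      · exact ⟨2, 3, by decide, by
          rw [habs]
          simp [Mmat, map_div₀, map_neg_eq_map, map_pow, abs_ω₃, Matrix.vecHead,
            Matrix.vecTail]
          try norm_num⟩
      · exact ⟨0, 1, by decide, by rw [habs]; simp [Mmat]⟩
  have h12 : (1:ℝ) / Real.sqrt 2 ≠ 1 / 2 := half_lt.ne'
  have h10 : (1:ℝ) / Real.sqrt 2 ≠ 0 := by positivity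
  refine ⟨?_, ?_, hset, ?_, ?_⟩
  · intro j
    have h := inner_val j j
    have hd : Mmat j j = 1 := by fin_cases j <;> simp [Mmat, Matrix.vecHead, Matrix.vecTail]
    rw [hd] at h
    have h2 := inner_self_eq_norm_sq_to_K (𝕜 := ℂ) (Φtri j)
    rw [h] at h2
    have h2' : ((‖Φtri j‖ ^ 2 : ℝ) : ℂ) = 1 := by push_cast; exact h2.symm
    have h3 : ‖Φtri j‖ ^ 2 = 1 := by exact_mod_cast h2'
    nlinarith [norm_nonneg (Φtri j), h3]
  · intro x
    ext i
    simp only [PiLp.smul_apply, Finset.sum_apply, smul_eq_mul]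
    rw [Fin.sum_univ_five]
    fin_cases i <;>
      simp [Φtri, PiLp.inner_apply, Fin.sum_univ_two, PiLp.toLp_apply,
        conj_ω₃, Matrix.vecHead, Matrix.vecTail, Function.comp] <;>
      first
        | linear_combination (3*(x 0) + (x 1)*(1+ω₃^2+ω₃^4)) * hinv2 +
            ((x 1)/2)*ω₃*ω₃_cube + ((x 1)/2)*ω₃_sum
        | linear_combination ((x 0)*(1+ω₃+ω₃^2) + (x 1)*(1+ω₃^3+ω₃^6)) * hinv2 +
            ((x 0)/2)*ω₃_sum + ((x 1)/2)*(ω₃^3+2)*ω₃_cube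
  · rw [hset]
    rw [Set.ncard_insert_of_notMem (by
        simp only [Set.mem_insert_iff, Set.mem_singleton_iff]
        push_neg
        exact ⟨h12, h10⟩),
      Set.ncard_insert_of_notMem (by norm_num), Set.ncard_singleton]
  · constructor
    · exact ⟨0, 2, by decide, by rw [habs]; simp [Mmat, abs_s]⟩
    · rintro r ⟨j, l, hjl, rfl⟩
      rw [habs]
      fin_cases j <;> fin_cases l <;> (try exact absurd rfl hjl) <;>
        simp [Mmat, map_mul, map_div₀, map_neg_eq_map, map_inv₀, map_pow, abs_ω₃,
          Complex.norm_real, _root_.abs_of_nonneg (Real.sqrt_nonneg 2),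
          Matrix.vecHead, Matrix.vecTail] <;> (try norm_num) <;>
        first
          | rfl
          | positivity
          | exact half_le'
          | linarith [half_le']
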